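/- Let X be a second-countable locally compact space with two metrics ρ₁, ρ₂ generating its topology, such that the identity (X,ρ₁) → (X,ρ₂) is locally Lipschitz. Then for each s ≥ 0 there is a locally bounded Borel function M : X → [0,∞) such that H₂^s(A) ≤ ∫_A M dH₁^s for every H^s-measurable set A, where H_i^s denotes s-dimensional Hausdorff measure with respect to ρ_i. -/

import Mathlib

open MeasureTheory Topology ENNReal

/-- Let X carry two metrics ρ₁, ρ₂ generating the same
(second-countable, locally compact) topology — modeled here by metric spaces X₁,
X₂ identified by a homeomorphism e — such that the identity (X,ρ₁) → (X,ρ₂) is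
locally Lipschitz.  Then for each s ≥ 0 there is a finite-valued, locally
bounded, Borel function M such that H₂^s(A) ≤ ∫_A M dH₁^s for every measurable
set A. -/
theorem hausdorff_measure_comparison_of_locallyLipschitz_id
    {X₁ X₂ : Type*} [MetricSpace X₁] [SecondCountableTopology X₁]
    [LocallyCompactSpace X₁] [MetricSpace X₂]
    [MeasurableSpace X₁] [BorelSpace X₁] [MeasurableSpace X₂] [BorelSpace X₂]
    (e : X₁ ≃ₜ X₂) (he : LocallyLipschitz e) (s : ℝ) (hs : 0 ≤ s) :
    ∃ M : X₁ → ℝ≥0∞, Measurable M ∧ (∀ x, M x ≠ ⊤) ∧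
      (∀ x : X₁, ∃ U ∈ 𝓝 x, ∃ C : ℝ≥0∞, C ≠ ⊤ ∧ ∀ y ∈ U, M y ≤ C) ∧
      ∀ A : Set X₁, MeasurableSet A →
        μH[s] (e '' A) ≤ ∫⁻ x in A, M x ∂(μH[s]) := by
  classical
  rcases isEmpty_or_nonempty X₁ with hX | hX
  · refine ⟨0, measurable_const, fun x => by simp, fun x => (IsEmpty.false x).elim, ?_⟩
    intro A _
    have : A = ∅ := Set.eq_empty_of_isEmpty A
    simp [this]
  -- choose for each x a Lipschitz constant and an open neighborhood
  have hVK : ∀ x : X₁, ∃ K : NNReal, ∃ V : Set X₁, IsOpen V ∧ V ∈ 𝓝 x ∧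
      LipschitzOnWith K e V := by
    intro x
    obtain ⟨K, t, ht, hK⟩ := he x
    exact ⟨K, interior t, isOpen_interior, interior_mem_nhds.2 ht,
      hK.mono interior_subset⟩
  choose K V hVopen hVnhds hVlip using hVK
  obtain ⟨s₀, hs₀c, hs₀u⟩ := TopologicalSpace.countable_cover_nhds hVnhds
  have hs₀ne : s₀.Nonempty := by
    by_contra h
    rw [Set.not_nonempty_iff_eq_empty] at h
    simp [h] at hs₀u
    exact (Set.univ_nonempty (α := X₁)).ne_empty hs₀u.symm
  obtain ⟨g, hg⟩ := Set.Countable.exists_eq_range hs₀c hs₀ne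
  set U : ℕ → Set X₁ := fun n => V (g n) with hU
  set Kn : ℕ → NNReal := fun n => K (g n) with hKn
  have hUuniv : ∀ x : X₁, ∃ n, x ∈ U n := by
    intro x
    have : x ∈ ⋃ y ∈ s₀, V y := hs₀u ▸ Set.mem_univ x
    simp only [Set.mem_iUnion] at this
    obtain ⟨y, hy, hxy⟩ := this
    rw [hg] at hy
    obtain ⟨n, rfl⟩ := hy
    exact ⟨n, hxy⟩
  set D : ℕ → Set X₁ := fun n => U n \ ⋃ m < n, U m with hD
  have hDsub : ∀ n, D n ⊆ U n := fun n => Set.diff_subset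
  have hDmeas : ∀ n, MeasurableSet (D n) :=
    fun n => ((hVopen (g n)).measurableSet).diff
      (MeasurableSet.biUnion (Set.to_countable _) fun m _ => (hVopen (g m)).measurableSet)
  have hDdisj : ∀ {x : X₁} {m n : ℕ}, x ∈ D m → x ∈ D n → m = n := by
    intro x m n hm hn
    by_contra h
    rcases Nat.lt_or_ge m n with hlt | hge
    · exact hn.2 (Set.mem_biUnion hlt hm.1)
    · have : n < m := lt_of_le_of_ne hge (Ne.symm h)
      exact hm.2 (Set.mem_biUnion this hn.1)
  have hfind : ∀ {x : X₁} {n : ℕ}, x ∈ U n → ∃ m ≤ n, x ∈ D m := by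
    intro x n hx
    have hex : ∃ m, x ∈ U m := ⟨n, hx⟩
    refine ⟨Nat.find hex, Nat.find_le hx, Nat.find_spec hex, ?_⟩
    intro hmem
    simp only [Set.mem_iUnion] at hmem
    obtain ⟨m, hm, hxm⟩ := hmem
    exact absurd (Nat.find_le hxm) (not_le.2 hm)
  set M : X₁ → ℝ≥0∞ :=
    fun x => ∑' n, (D n).indicator (fun _ => (Kn n : ℝ≥0∞) ^ s) x with hM
  have hMval : ∀ {x : X₁} {n : ℕ}, x ∈ D n → M x = (Kn n : ℝ≥0∞) ^ s := by
    intro x n hx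
    rw [hM]
    dsimp only
    rw [tsum_eq_single n]
    · simp [Set.indicator_of_mem hx]
    · intro m hmn
      apply Set.indicator_of_notMem
      intro hxm
      exact hmn (hDdisj hxm hx)
  have hMmeas : Measurable M := by
    apply Measurable.ennreal_tsum
    exact fun n => measurable_const.indicator (hDmeas n)
  have hfin : ∀ n, (Kn n : ℝ≥0∞) ^ s ≠ ⊤ :=
    fun n => ENNReal.rpow_ne_top_of_nonneg hs ENNReal.coe_ne_top
  refine ⟨M, hMmeas, ?_, ?_, ?_⟩
  · intro x
    obtain ⟨n, hn⟩ := hUuniv x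
    obtain ⟨m, _, hm⟩ := hfind hn
    rw [hMval hm]
    exact hfin m
  · intro x
    obtain ⟨n, hn⟩ := hUuniv x
    refine ⟨U n, (hVopen (g n)).mem_nhds hn,
      (Finset.range (n + 1)).sup (fun m => (Kn m : ℝ≥0∞) ^ s), ?_, ?_⟩
    · rw [← lt_top_iff_ne_top]
      apply Finset.sup_lt_iff (by simp : (⊥ : ℝ≥0∞) < ⊤) |>.2
      intro m _
      exact lt_top_iff_ne_top.2 (hfin m)
    · intro y hy
      obtain ⟨m, hmn, hm⟩ := hfind hy
      rw [hMval hm]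
      exact Finset.le_sup (f := fun m => ((Kn m : ℝ≥0∞)) ^ s) (Finset.mem_range.2 (Nat.lt_succ_of_le hmn))
  · intro A hA
    have hAcover : A ⊆ ⋃ n, A ∩ D n := by
      intro x hx
      obtain ⟨n, hn⟩ := hUuniv x
      obtain ⟨m, _, hm⟩ := hfind hn
      exact Set.mem_iUnion.2 ⟨m, hx, hm⟩
    calc μH[s] (e '' A) ≤ μH[s] (⋃ n, e '' (A ∩ D n)) := by
          apply measure_mono
          rw [← Set.image_iUnion]
          exact Set.image_mono hAcover
      _ ≤ ∑' n, μH[s] (e '' (A ∩ D n)) := measure_iUnion_le _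
      _ ≤ ∑' n, (Kn n : ℝ≥0∞) ^ s * μH[s] (A ∩ D n) := by
          apply ENNReal.tsum_le_tsum
          intro n
          exact ((hVlip (g n)).mono (Set.inter_subset_right.trans
            (hDsub n))).hausdorffMeasure_image_le hs
      _ = ∫⁻ x in A, M x ∂(μH[s]) := by
          rw [hM]
          rw [lintegral_tsum (fun n =>
            (measurable_const.indicator (hDmeas n)).aemeasurable)]
          congr 1
          ext n
          rw [lintegral_indicator (hDmeas n)]
          simp [Measure.restrict_apply (hDmeas n), Set.inter_comm]
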